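/- Let n ≥ 1 be an integer, r > 0, and let v, h be holomorphic on the disk {z : |z| < r} with h(z) ≠ 0 for all |z| < r. Define, on the punctured disk {z : 0 < |z| < r}, u(z) = n(n+1)/z² + v(z) and ψ(z) = z^{−n} h(z), and set ũ(z) = u(z) − 2 (ψ'/ψ)'(z). Then the function z ↦ ũ(z) − n(n−1)/z² extends holomorphically to the whole disk {z : |z| < r}. -/

import Mathlib

open Metric

theorem stmt_13 (n : ℕ) (hn : 1 ≤ n) (r : ℝ) (hr : 0 < r) (v h : ℂ → ℂ)
    (hv : DifferentiableOn ℂ v (ball 0 r))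
    (hh : DifferentiableOn ℂ h (ball 0 r))
    (hne : ∀ z ∈ ball (0 : ℂ) r, h z ≠ 0)
    (u ψ : ℂ → ℂ)
    (hu : ∀ z : ℂ, u z = (n : ℂ) * ((n : ℂ) + 1) / z ^ 2 + v z)
    (hψ : ∀ z : ℂ, ψ z = z ^ (-(n : ℤ)) * h z) :
    ∃ H : ℂ → ℂ, DifferentiableOn ℂ H (ball 0 r) ∧
      ∀ z ∈ ball (0 : ℂ) r \ {0},
        H z = (u z - 2 * deriv (fun w => deriv ψ w / ψ w) z)
          - (n : ℂ) * ((n : ℂ) - 1) / z ^ 2 := by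
  have hs : IsOpen (ball (0:ℂ) r) := isOpen_ball
  have hhA : AnalyticOnNhd ℂ h (ball 0 r) := hh.analyticOnNhd hs
  have hdh : DifferentiableOn ℂ (deriv h) (ball 0 r) := hhA.deriv.differentiableOn
  have hg : DifferentiableOn ℂ (fun w => deriv h w / h w) (ball 0 r) :=
    hdh.div hh hne
  have hgA : AnalyticOnNhd ℂ (fun w => deriv h w / h w) (ball 0 r) :=
    hg.analyticOnNhd hs
  have hdg : DifferentiableOn ℂ (deriv fun w => deriv h w / h w) (ball 0 r) :=
    hgA.deriv.differentiableOn
  refine ⟨fun z => v z - 2 * deriv (fun w => deriv h w / h w) z,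
    hv.sub (hdg.const_mul 2), ?_⟩
  rintro z ⟨hz, hz0'⟩
  have hz0 : z ≠ 0 := by simpa using hz0'
  have ht : IsOpen (ball (0:ℂ) r \ {0}) := hs.sdiff isClosed_singleton
  have hzt : z ∈ ball (0:ℂ) r \ {0} := ⟨hz, hz0'⟩
  -- pointwise formula on the punctured ball
  have key : ∀ w ∈ ball (0:ℂ) r \ {0},
      deriv ψ w / ψ w = -(n:ℂ) / w + deriv h w / h w := by
    rintro w ⟨hw, hw0'⟩
    have hw0 : w ≠ 0 := by simpa using hw0'
    have hψf : ψ = fun w => w ^ (-(n:ℤ)) * h w := funext hψ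
    have hd1 : DifferentiableAt ℂ (fun w : ℂ => w ^ (-(n:ℤ))) w :=
      differentiableAt_zpow.mpr (Or.inl hw0)
    have hd2 : DifferentiableAt ℂ h w := hh.differentiableAt (hs.mem_nhds hw)
    have hψ' : deriv ψ w =
        (-(n:ℤ) : ℂ) * w ^ (-(n:ℤ) - 1) * h w + w ^ (-(n:ℤ)) * deriv h w := by
      rw [hψf, deriv_fun_mul hd1 hd2, deriv_zpow]
      push_cast
      ring
    have hz1 : w ^ (-(n:ℤ) - 1) = w ^ (-(n:ℤ)) * w⁻¹ := by
      rw [zpow_sub₀ hw0, zpow_one]; rfl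
    have hzn : w ^ (-(n:ℤ)) ≠ 0 := zpow_ne_zero _ hw0
    have hhw : h w ≠ 0 := hne w hw
    have step : deriv ψ w / ψ w =
        (w ^ (-(n:ℤ)) * (-(n:ℂ) * w⁻¹ * h w + deriv h w)) / (w ^ (-(n:ℤ)) * h w) := by
      rw [hψ', hψ w, hz1]; congr 1; push_cast; ring
    rw [step, mul_div_mul_left _ _ hzn]
    field_simp
  have hev : (fun w => deriv ψ w / ψ w) =ᶠ[nhds z]
      fun w => -(n:ℂ) / w + deriv h w / h w :=
    Filter.eventuallyEq_of_mem (ht.mem_nhds hzt) key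
  have hdinv : DifferentiableAt ℂ (fun w : ℂ => -(n:ℂ) / w) z := by
    simp only [div_eq_mul_inv]
    exact (differentiableAt_inv hz0).const_mul _
  have hgz : DifferentiableAt ℂ (fun w => deriv h w / h w) z :=
    hg.differentiableAt (hs.mem_nhds hz)
  have hderiv : deriv (fun w => deriv ψ w / ψ w) z =
      (n:ℂ) / z ^ 2 + deriv (fun w => deriv h w / h w) z := by
    rw [hev.deriv_eq, deriv_fun_add hdinv hgz]
    congr 1
    have : (fun w : ℂ => -(n:ℂ) / w) = fun w => -(n:ℂ) * w⁻¹ := by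
      funext w; rw [div_eq_mul_inv]
    rw [this, deriv_const_mul _ (differentiableAt_inv hz0), deriv_inv]
    field_simp
  rw [hderiv, hu z]
  field_simp
  ring
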